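/- The piecewise function D(α) from the dimension formula is differentiable at α = 2 - √3 but its second derivative does not exist there, and D is not differentiable at α = 3 - 2√2. -/

import Mathlib

open Real

/-- The piecewise dimension formula for the uniform recurrence set. -/
noncomputable def dimFormula (α : ℝ) : ℝ :=
  if α ≤ 3 - 2 * Real.sqrt 2 then 2 * (1 - α) ^ 2 / (1 + α) ^ 2
  else if α ≤ 2 - Real.sqrt 3 then (1 - Real.sqrt (2 * α)) ^ 2 / α
  else if α ≤ 1 / 3 then (1 - 3 * α) / (1 - α)
  else 0

namespace Stmt11

open Set Filter Topology

noncomputable def Ff (α : ℝ) : ℝ := (1 - Real.sqrt (2 * α)) ^ 2 / α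
noncomputable def Ff' (α : ℝ) : ℝ := Real.sqrt 2 / (α * Real.sqrt α) - (α ^ 2)⁻¹
noncomputable def Gf (α : ℝ) : ℝ := (1 - 3 * α) / (1 - α)
noncomputable def Gf' (α : ℝ) : ℝ := -2 / (1 - α) ^ 2

lemma s2_sq : Real.sqrt 2 ^ 2 = 2 := Real.sq_sqrt (by norm_num)
lemma s3_sq : Real.sqrt 3 ^ 2 = 3 := Real.sq_sqrt (by norm_num)
lemma s2_lb : 1.414 < Real.sqrt 2 := by nlinarith [s2_sq, Real.sqrt_nonneg 2]
lemma s2_ub : Real.sqrt 2 < 1.415 := by nlinarith [s2_sq, Real.sqrt_nonneg 2]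
lemma s3_lb : 1.732 < Real.sqrt 3 := by nlinarith [s3_sq, Real.sqrt_nonneg 3]
lemma s3_ub : Real.sqrt 3 < 1.7321 := by nlinarith [s3_sq, Real.sqrt_nonneg 3]

lemma hA_pos : 0 < 3 - 2 * Real.sqrt 2 := by nlinarith [s2_ub]
lemma hAB : 3 - 2 * Real.sqrt 2 < 2 - Real.sqrt 3 := by nlinarith [s2_lb, s3_ub]
lemma hB_pos : 0 < 2 - Real.sqrt 3 := by nlinarith [s3_ub]
lemma hB_lt : 2 - Real.sqrt 3 < 1 / 3 := by nlinarith [s3_lb]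

lemma sqrtA : Real.sqrt (3 - 2 * Real.sqrt 2) = Real.sqrt 2 - 1 := by
  rw [show 3 - 2 * Real.sqrt 2 = (Real.sqrt 2 - 1) ^ 2 by linear_combination -s2_sq]
  exact Real.sqrt_sq (by nlinarith [s2_lb])

lemma sqrtB : Real.sqrt (2 - Real.sqrt 3) = (Real.sqrt 3 - 1) / Real.sqrt 2 := by
  rw [show 2 - Real.sqrt 3 = ((Real.sqrt 3 - 1) / Real.sqrt 2) ^ 2 by
    rw [div_pow, s2_sq]; linear_combination (-1/2 : ℝ) * s3_sq]
  exact Real.sqrt_sq (div_nonneg (by nlinarith [s3_lb]) (Real.sqrt_nonneg 2))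

lemma sqrt2B : Real.sqrt (2 * (2 - Real.sqrt 3)) = Real.sqrt 3 - 1 := by
  rw [show 2 * (2 - Real.sqrt 3) = (Real.sqrt 3 - 1) ^ 2 by linear_combination -s3_sq]
  exact Real.sqrt_sq (by nlinarith [s3_lb])

lemma hasDerivAt_Ff {α : ℝ} (hα : 0 < α) : HasDerivAt Ff (Ff' α) α := by
  have h2α : (0:ℝ) < 2 * α := by linarith
  have hmul : HasDerivAt (fun x : ℝ => 2 * x) 2 α := by
    simpa using (hasDerivAt_id α).const_mul 2
  have hu : HasDerivAt (fun x : ℝ => Real.sqrt (2 * x)) (2 / (2 * Real.sqrt (2 * α))) α :=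
    hmul.sqrt (ne_of_gt h2α)
  have hp := ((hasDerivAt_const α (1:ℝ)).sub hu).pow 2
  have hdiv := hp.div (hasDerivAt_id α) (ne_of_gt hα)
  refine hdiv.congr_deriv (Eq.symm ?_)
  have hsα : Real.sqrt α > 0 := Real.sqrt_pos.2 hα
  have hsa2 : Real.sqrt α ^ 2 = α := Real.sq_sqrt hα.le
  simp only [Pi.sub_apply, Pi.pow_apply, id]
  rw [Real.sqrt_mul (by norm_num) α]
  unfold Ff'
  field_simp
  linear_combination (-4 * α^3 * Real.sqrt α * Real.sqrt 2^2 + 2 * α^3 * Real.sqrt α^2 * Real.sqrt 2^3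
      - 4 * α^4 * Real.sqrt 2 + 2 * α^4 * Real.sqrt 2^3) * hsa2
    + (-2 * α^4 * Real.sqrt α + 2 * α^5 * Real.sqrt 2) * s2_sq
    + (-4 + 8 * Real.sqrt α * α^3 + 2 * Real.sqrt 2 * Real.sqrt α
        - 4 * Real.sqrt 2 * Real.sqrt α^2 * α^3) * hsa2
    + (α - 2 * Real.sqrt α * α^4 - 2 * Real.sqrt α^2 + 4 * Real.sqrt α^3 * α^3
        + Real.sqrt 2 * Real.sqrt α^3 - 2 * Real.sqrt 2 * Real.sqrt α^4 * α^3) * s2_sq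

lemma hasDerivAt_Gf {α : ℝ} (hα : α ≠ 1) : HasDerivAt Gf (Gf' α) α := by
  have h1 : (1:ℝ) - α ≠ 0 := sub_ne_zero.2 (Ne.symm hα)
  have hnum : HasDerivAt (fun x : ℝ => 1 - 3 * x) (-3) α := by
    simpa using ((hasDerivAt_id α).const_mul 3).const_sub 1
  have hden : HasDerivAt (fun x : ℝ => 1 - x) (-1) α := by
    simpa using (hasDerivAt_id α).const_sub 1
  have hdiv := hnum.div hden h1
  refine hdiv.congr_deriv (Eq.symm ?_)
  unfold Gf'
  field_simp
  ring

lemma dim_eq_F {x : ℝ} (h1 : 3 - 2 * Real.sqrt 2 < x) (h2 : x ≤ 2 - Real.sqrt 3) :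
    dimFormula x = Ff x := by
  simp only [dimFormula, Ff, if_neg (not_le.2 h1), if_pos h2]

lemma dim_eq_G {x : ℝ} (h1 : 2 - Real.sqrt 3 < x) (h2 : x ≤ 1 / 3) :
    dimFormula x = Gf x := by
  have hx : ¬ x ≤ 3 - 2 * Real.sqrt 2 := by push_neg; linarith [hAB]
  simp only [dimFormula, Gf, if_neg hx, if_neg (not_le.2 h1), if_pos h2]

lemma FB_eq_GB : Ff (2 - Real.sqrt 3) = Gf (2 - Real.sqrt 3) := by
  have h1 : (2:ℝ) - Real.sqrt 3 ≠ 0 := ne_of_gt hB_pos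
  have h2 : (1:ℝ) - (2 - Real.sqrt 3) ≠ 0 := by nlinarith [s3_lb]
  unfold Ff Gf
  rw [sqrt2B]
  field_simp
  linear_combination (Real.sqrt 3 - 2) * s3_sq

lemma F'B_eq_G'B : Ff' (2 - Real.sqrt 3) = Gf' (2 - Real.sqrt 3) := by
  have h1 : (2:ℝ) - Real.sqrt 3 ≠ 0 := ne_of_gt hB_pos
  have h2 : Real.sqrt 3 - 1 ≠ 0 := by nlinarith [s3_lb]
  have h3 : Real.sqrt 2 ≠ 0 := by nlinarith [s2_lb]
  have h4 : (1:ℝ) - (2 - Real.sqrt 3) ≠ 0 := by nlinarith [s3_lb]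
  unfold Ff' Gf'
  rw [sqrtB]
  field_simp
  linear_combination (1 - Real.sqrt 3) * s3_sq
    + (2 - 5 * Real.sqrt 3 + 4 * Real.sqrt 3 ^ 2 - Real.sqrt 3 ^ 3) * s2_sq

noncomputable def Hf (α : ℝ) : ℝ := 2 * (1 - α) ^ 2 / (1 + α) ^ 2
noncomputable def Hf' (α : ℝ) : ℝ := -8 * (1 - α) / (1 + α) ^ 3
noncomputable def Ff2 (α : ℝ) : ℝ := 2 / α ^ 3 - 3 * Real.sqrt 2 / (2 * α ^ 2 * Real.sqrt α)
noncomputable def Gf2 (α : ℝ) : ℝ := -4 / (1 - α) ^ 3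
noncomputable def phiD (x : ℝ) : ℝ := if x ≤ 2 - Real.sqrt 3 then Ff' x else Gf' x

lemma hasDerivAt_Hf {α : ℝ} (hα : α ≠ -1) : HasDerivAt Hf (Hf' α) α := by
  have hden : (1:ℝ) + α ≠ 0 := by intro h; apply hα; linarith
  have h1 : HasDerivAt (fun x : ℝ => 2 * (1 - x) ^ 2)
      (2 * (2 * (1 - α) ^ (2 - 1) * (0 - 1))) α :=
    (((hasDerivAt_const α (1:ℝ)).sub (hasDerivAt_id α)).pow 2).const_mul 2
  have h2 : HasDerivAt (fun x : ℝ => (1 + x) ^ 2)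
      (2 * (1 + α) ^ (2 - 1) * (0 + 1)) α :=
    ((hasDerivAt_const α (1:ℝ)).add (hasDerivAt_id α)).pow 2
  have hdiv := h1.div h2 (pow_ne_zero 2 hden)
  refine hdiv.congr_deriv (Eq.symm ?_)
  unfold Hf'
  field_simp
  ring

lemma hasDerivAt_Ff' {α : ℝ} (hα : 0 < α) : HasDerivAt Ff' (Ff2 α) α := by
  have hsα : (0:ℝ) < Real.sqrt α := Real.sqrt_pos.2 hα
  have hsa2 : Real.sqrt α ^ 2 = α := Real.sq_sqrt hα.le
  have h1 : HasDerivAt (fun x : ℝ => x * Real.sqrt x)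
      (1 * Real.sqrt α + α * (1 / (2 * Real.sqrt α))) α :=
    (hasDerivAt_id α).mul (Real.hasDerivAt_sqrt (ne_of_gt hα))
  have h2 := (hasDerivAt_const α (Real.sqrt 2)).div h1 (ne_of_gt (mul_pos hα hsα))
  have h3 := (hasDerivAt_pow 2 α).inv (pow_ne_zero 2 (ne_of_gt hα))
  have := h2.sub h3
  refine this.congr_deriv (Eq.symm ?_)
  unfold Ff2
  field_simp
  linear_combination (-α^2 * Real.sqrt 2) * hsa2

lemma hasDerivAt_Gf' {α : ℝ} (hα : α ≠ 1) : HasDerivAt Gf' (Gf2 α) α := by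
  have hden : (1:ℝ) - α ≠ 0 := sub_ne_zero.2 (Ne.symm hα)
  have h1 : HasDerivAt (fun x : ℝ => (1 - x) ^ 2)
      (2 * (1 - α) ^ (2 - 1) * (0 - 1)) α :=
    ((hasDerivAt_const α (1:ℝ)).sub (hasDerivAt_id α)).pow 2
  have hdiv := (hasDerivAt_const α (-2:ℝ)).div h1 (pow_ne_zero 2 hden)
  refine hdiv.congr_deriv (Eq.symm ?_)
  unfold Gf2
  field_simp
  ring

lemma dim_eq_H {x : ℝ} (h : x ≤ 3 - 2 * Real.sqrt 2) : dimFormula x = Hf x := by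
  simp only [dimFormula, Hf, if_pos h]

lemma sqrt2A : Real.sqrt (2 * (3 - 2 * Real.sqrt 2)) = 2 - Real.sqrt 2 := by
  rw [show 2 * (3 - 2 * Real.sqrt 2) = (2 - Real.sqrt 2) ^ 2 by linear_combination -s2_sq]
  exact Real.sqrt_sq (by nlinarith [s2_ub])

lemma HA_eq_FA : Hf (3 - 2 * Real.sqrt 2) = Ff (3 - 2 * Real.sqrt 2) := by
  have h1 : (3:ℝ) - 2 * Real.sqrt 2 ≠ 0 := ne_of_gt hA_pos
  have h2 : (1:ℝ) + (3 - 2 * Real.sqrt 2) ≠ 0 := by nlinarith [s2_ub]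
  unfold Hf Ff
  rw [sqrt2A]
  field_simp
  linear_combination (-4 + 8 * Real.sqrt 2 - 4 * Real.sqrt 2 ^ 2) * s2_sq

lemma Ff'A_val : Ff' (3 - 2 * Real.sqrt 2) = -7 - 5 * Real.sqrt 2 := by
  have h1 : (3:ℝ) - 2 * Real.sqrt 2 ≠ 0 := ne_of_gt hA_pos
  have h2 : Real.sqrt 2 - 1 ≠ 0 := by nlinarith [s2_lb]
  unfold Ff'
  have h1' : (3:ℝ) - Real.sqrt 2 * 2 ≠ 0 := by nlinarith [s2_ub]
  rw [sqrtA]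
  field_simp
  linear_combination (31 - 52 * Real.sqrt 2 + 20 * Real.sqrt 2 ^ 2) * s2_sq

lemma Hf'A_val : Hf' (3 - 2 * Real.sqrt 2) = -(3 * Real.sqrt 2 + 4) / 2 := by
  have h2 : (1:ℝ) + (3 - 2 * Real.sqrt 2) ≠ 0 := by nlinarith [s2_ub]
  unfold Hf'
  field_simp
  linear_combination (-144 + 112 * Real.sqrt 2 - 24 * Real.sqrt 2 ^ 2) * s2_sq

lemma F'A_ne_H'A : Ff' (3 - 2 * Real.sqrt 2) ≠ Hf' (3 - 2 * Real.sqrt 2) := by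
  rw [Ff'A_val, Hf'A_val]
  intro h
  linarith [s2_lb]

lemma Ff2B_val : Ff2 (2 - Real.sqrt 3) = (47 + 27 * Real.sqrt 3) / 2 := by
  have h1 : (2:ℝ) - Real.sqrt 3 ≠ 0 := ne_of_gt hB_pos
  have h2 : Real.sqrt 3 - 1 ≠ 0 := by nlinarith [s3_lb]
  have h3 : Real.sqrt 2 ≠ 0 := by nlinarith [s2_lb]
  unfold Ff2
  rw [sqrtB]
  field_simp
  linear_combination (-48 - 36 * Real.sqrt 2 ^ 2 + 226 * Real.sqrt 3 + 6 * Real.sqrt 3 * Real.sqrt 2 ^ 2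
      - 142 * Real.sqrt 3 ^ 2 + 27 * Real.sqrt 3 ^ 3) * s3_sq
    + (-114 + 21 * Real.sqrt 3 + 36 * Real.sqrt 3 ^ 2 - 6 * Real.sqrt 3 ^ 3) * s2_sq

lemma Ff2B_pos : 0 < Ff2 (2 - Real.sqrt 3) := by
  rw [Ff2B_val]; nlinarith [s3_lb]

lemma Gf2B_neg : Gf2 (2 - Real.sqrt 3) < 0 := by
  unfold Gf2
  have h : (0:ℝ) < (1 - (2 - Real.sqrt 3)) ^ 3 := pow_pos (by nlinarith [s3_lb]) 3
  exact div_neg_of_neg_of_pos (by norm_num) h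

lemma hasDerivAt_dim_B :
    HasDerivAt dimFormula (Ff' (2 - Real.sqrt 3)) (2 - Real.sqrt 3) := by
  have hl : HasDerivWithinAt dimFormula (Ff' (2 - Real.sqrt 3))
      (Iic (2 - Real.sqrt 3)) (2 - Real.sqrt 3) := by
    refine ((hasDerivAt_Ff hB_pos).hasDerivWithinAt).congr_of_eventuallyEq ?_
      (dim_eq_F hAB le_rfl)
    filter_upwards [self_mem_nhdsWithin,
      ((eventually_gt_nhds hAB).filter_mono nhdsWithin_le_nhds :
        ∀ᶠ y in 𝓝[Iic (2 - Real.sqrt 3)] (2 - Real.sqrt 3), 3 - 2 * Real.sqrt 2 < y)]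
      with y hy1 hy2
    exact dim_eq_F hy2 hy1
  have hr : HasDerivWithinAt dimFormula (Ff' (2 - Real.sqrt 3))
      (Ici (2 - Real.sqrt 3)) (2 - Real.sqrt 3) := by
    rw [F'B_eq_G'B]
    have hB1 : (2:ℝ) - Real.sqrt 3 ≠ 1 := by nlinarith [s3_lb]
    refine ((hasDerivAt_Gf hB1).hasDerivWithinAt).congr_of_eventuallyEq ?_ ?_
    · filter_upwards [self_mem_nhdsWithin,
        ((eventually_lt_nhds hB_lt).filter_mono nhdsWithin_le_nhds :
          ∀ᶠ y in 𝓝[Ici (2 - Real.sqrt 3)] (2 - Real.sqrt 3), y < 1 / 3)]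
        with y hy1 hy2
      rcases eq_or_lt_of_le (Set.mem_Ici.mp hy1 : 2 - Real.sqrt 3 ≤ y) with hEq | hLt
      · rw [← hEq, dim_eq_F hAB le_rfl, FB_eq_GB]
      · exact dim_eq_G hLt hy2.le
    · rw [dim_eq_F hAB le_rfl, FB_eq_GB]
  have h := hl.union hr
  rw [Iic_union_Ici] at h
  exact hasDerivWithinAt_univ.mp h

lemma deriv_dim_eventually : deriv dimFormula =ᶠ[𝓝 (2 - Real.sqrt 3)] phiD := by
  filter_upwards [Ioo_mem_nhds hAB hB_lt] with y hy
  rcases lt_trichotomy y (2 - Real.sqrt 3) with h | h | h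
  · have hev : dimFormula =ᶠ[𝓝 y] Ff := by
      filter_upwards [Ioo_mem_nhds hy.1 h] with z hz
      exact dim_eq_F hz.1 hz.2.le
    rw [hev.deriv_eq, (hasDerivAt_Ff (lt_trans hA_pos hy.1)).deriv]
    simp only [phiD, if_pos h.le]
  · rw [h, hasDerivAt_dim_B.deriv]
    simp only [phiD, if_pos le_rfl]
  · have hev : dimFormula =ᶠ[𝓝 y] Gf := by
      filter_upwards [Ioo_mem_nhds h hy.2] with z hz
      exact dim_eq_G hz.1 hz.2.le
    have hy1 : y ≠ 1 := ne_of_lt (lt_trans hy.2 (by norm_num))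
    rw [hev.deriv_eq, (hasDerivAt_Gf hy1).deriv]
    simp only [phiD, if_neg (not_le.2 h)]

lemma not_diff_deriv_B : ¬ DifferentiableAt ℝ (deriv dimFormula) (2 - Real.sqrt 3) := by
  intro h
  have hφ : DifferentiableAt ℝ phiD (2 - Real.sqrt 3) :=
    (deriv_dim_eventually.differentiableAt_iff).mp h
  have hB1 : (2:ℝ) - Real.sqrt 3 ≠ 1 := by nlinarith [s3_lb]
  have hl : HasDerivWithinAt phiD (Ff2 (2 - Real.sqrt 3))
      (Iic (2 - Real.sqrt 3)) (2 - Real.sqrt 3) :=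
    ((hasDerivAt_Ff' hB_pos).hasDerivWithinAt).congr
      (fun y hy => if_pos hy) (if_pos le_rfl)
  have hr : HasDerivWithinAt phiD (Gf2 (2 - Real.sqrt 3))
      (Ici (2 - Real.sqrt 3)) (2 - Real.sqrt 3) := by
    refine ((hasDerivAt_Gf' hB1).hasDerivWithinAt).congr_of_eventuallyEq ?_ ?_
    · filter_upwards [self_mem_nhdsWithin] with y hy
      rcases eq_or_lt_of_le (Set.mem_Ici.mp hy : 2 - Real.sqrt 3 ≤ y) with hEq | hLt
      · rw [← hEq]
        simp only [phiD, if_pos le_rfl]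
        exact F'B_eq_G'B
      · simp only [phiD, if_neg (not_le.2 hLt)]
    · simp only [phiD, if_pos le_rfl]
      exact F'B_eq_G'B
  have e1 := (uniqueDiffOn_Iic _ _ self_mem_Iic).eq_deriv _ hl
    hφ.hasDerivAt.hasDerivWithinAt
  have e2 := (uniqueDiffOn_Ici _ _ self_mem_Ici).eq_deriv _ hr
    hφ.hasDerivAt.hasDerivWithinAt
  have : Ff2 (2 - Real.sqrt 3) = Gf2 (2 - Real.sqrt 3) := e1.trans e2.symm
  linarith [Ff2B_pos, Gf2B_neg]

lemma not_diff_A : ¬ DifferentiableAt ℝ dimFormula (3 - 2 * Real.sqrt 2) := by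
  intro h
  have hAne : (3:ℝ) - 2 * Real.sqrt 2 ≠ -1 := by nlinarith [s2_ub]
  have hl : HasDerivWithinAt dimFormula (Hf' (3 - 2 * Real.sqrt 2))
      (Iic (3 - 2 * Real.sqrt 2)) (3 - 2 * Real.sqrt 2) :=
    ((hasDerivAt_Hf hAne).hasDerivWithinAt).congr
      (fun y hy => dim_eq_H hy) (dim_eq_H le_rfl)
  have hr : HasDerivWithinAt dimFormula (Ff' (3 - 2 * Real.sqrt 2))
      (Ici (3 - 2 * Real.sqrt 2)) (3 - 2 * Real.sqrt 2) := by
    refine ((hasDerivAt_Ff hA_pos).hasDerivWithinAt).congr_of_eventuallyEq ?_ ?_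
    · filter_upwards [self_mem_nhdsWithin,
        ((eventually_lt_nhds hAB).filter_mono nhdsWithin_le_nhds :
          ∀ᶠ y in 𝓝[Ici (3 - 2 * Real.sqrt 2)] (3 - 2 * Real.sqrt 2), y < 2 - Real.sqrt 3)]
        with y hy1 hy2
      rcases eq_or_lt_of_le (Set.mem_Ici.mp hy1 : 3 - 2 * Real.sqrt 2 ≤ y) with hEq | hLt
      · rw [← hEq, dim_eq_H le_rfl, HA_eq_FA]
      · exact dim_eq_F hLt hy2.le
    · rw [dim_eq_H le_rfl, HA_eq_FA]
  have e1 := (uniqueDiffOn_Iic _ _ self_mem_Iic).eq_deriv _ hl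
    h.hasDerivAt.hasDerivWithinAt
  have e2 := (uniqueDiffOn_Ici _ _ self_mem_Ici).eq_deriv _ hr
    h.hasDerivAt.hasDerivWithinAt
  exact F'A_ne_H'A (e2.trans e1.symm)

end Stmt11

theorem stmt_11 :
    DifferentiableAt ℝ dimFormula (2 - Real.sqrt 3) ∧
    ¬ DifferentiableAt ℝ (deriv dimFormula) (2 - Real.sqrt 3) ∧
    ¬ DifferentiableAt ℝ dimFormula (3 - 2 * Real.sqrt 2) :=
  ⟨Stmt11.hasDerivAt_dim_B.differentiableAt, Stmt11.not_diff_deriv_B, Stmt11.not_diff_A⟩
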